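/- Let A and B be disjoint finite sets with |A| = n ≥ 1, |B| = m ≥ 1, m ≤ n ≤ 2^{2^q + r}, let p, q, r ∈ ℕ, and let (h(s))_{s∈A∪B} be independent uniform [0,1] random variables. With Z_i the indicator that bucket i ∈ {0,…,2^p−1} is occupied for both A and B and the HyperMinHash bucket values coincide, f(A)_i = f(B)_i, let C = Σ_{i=0}^{2^p−1} Z_i be the total number of bucket collisions. Then E[C] ≤ 2^p ( 5/2^r + n/2^{p + 2^q + r} ). -/

import Mathlib

open MeasureTheory ProbabilityTheory

/-- `ρ_q(x) = min(⌊−log₂ x⌋ + 1, 2^q)`, the truncated position of the leading 1 bit. -/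
noncomputable def rhoHMH (q : ℕ) (x : ℝ) : ℤ :=
  min (⌊-Real.logb 2 x⌋ + 1) (2 ^ q)

/-- `σ_r(x) = ⌊x·2^r⌋`, the next `r` bits. -/
noncomputable def sigmaHMH (r : ℕ) (x : ℝ) : ℤ :=
  ⌊x * 2 ^ r⌋

/-- The HyperMinHash bucket encoding `ĥ_{q,r}(x) = (ρ_q(x), σ_r(x·2^{ρ_q(x)} − 1))`. -/
noncomputable def hatHMH (q r : ℕ) (x : ℝ) : ℤ × ℤ :=
  (rhoHMH q x, sigmaHMH r (x * (2 : ℝ) ^ rhoHMH q x - 1))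

/-- Bucket `i` of the set `S` is occupied: some `s ∈ S` has `i·2^{−p} < h(s) < (i+1)·2^{−p}`. -/
def bucketOccupied {ι Ω : Type*} (h : ι → Ω → ℝ) (p : ℕ) (S : Finset ι) (i : ℕ) (ω : Ω) :
    Prop :=
  ∃ s ∈ S, (i : ℝ) / 2 ^ p < h s ω ∧ h s ω < ((i : ℝ) + 1) / 2 ^ p

/-- The rescaled minimum hash `min{h(s)·2^p − i : s ∈ S, i·2^{−p} < h(s) < (i+1)·2^{−p}}`
of bucket `i` of the set `S`. -/
noncomputable def bucketMin {ι Ω : Type*} (h : ι → Ω → ℝ) (p : ℕ) (S : Finset ι) (i : ℕ)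
    (ω : Ω) : ℝ :=
  sInf {x : ℝ | ∃ s ∈ S, ((i : ℝ) / 2 ^ p < h s ω ∧ h s ω < ((i : ℝ) + 1) / 2 ^ p)
    ∧ x = h s ω * 2 ^ p - i}

open scoped Classical

open intervalIntegral in
lemma integral_one_sub_pow (m : ℕ) : ∫ u in (0:ℝ)..1, (1 - u) ^ m = 1 / (m + 1) := by
  have h := intervalIntegral.integral_comp_sub_left (a := (0:ℝ)) (b := 1)
    (fun x => x ^ m) 1
  simp only [sub_zero, sub_self] at h
  rw [h, integral_pow]
  simp

lemma calc1 (n : ℕ) (hn : 1 ≤ n) (c P : ℝ) (hc : 0 ≤ c) (hP : 1 ≤ P) :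
    ∫ u in (0:ℝ)..(1/P), (u * P + c) * (1 - u) ^ (n - 1) ≤ P / (n * (n + 1)) + c / n := by
  have hP0 : (0:ℝ) < P := by linarith
  have h1P : 1/P ≤ 1 := by rw [div_le_one hP0]; linarith
  have h1P0 : (0:ℝ) ≤ 1/P := by positivity
  have hn0 : (0:ℝ) < n := by exact_mod_cast hn
  have hcont : Continuous fun u : ℝ => (u * P + c) * (1 - u) ^ (n - 1) := by continuity
  have hmono : ∫ u in (0:ℝ)..(1/P), (u * P + c) * (1 - u) ^ (n - 1)
      ≤ ∫ u in (0:ℝ)..1, (u * P + c) * (1 - u) ^ (n - 1) := by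
    apply intervalIntegral.integral_mono_interval le_rfl h1P0 h1P ?_
      (hcont.intervalIntegrable _ _)
    filter_upwards [ae_restrict_mem measurableSet_Ioc] with u hu
    have h1 : 0 ≤ 1 - u := by linarith [hu.2]
    have h2 : 0 ≤ u := le_of_lt hu.1
    positivity
  have heq : ∀ u : ℝ, (u * P + c) * (1 - u) ^ (n - 1)
      = P * ((1-u)^(n-1) - (1-u)^n) + c * (1-u)^(n-1) := by
    intro u
    have hpow : (1 - u) ^ n = (1 - u) * (1 - u) ^ (n - 1) := by
      conv_lhs => rw [show n = 1 + (n-1) from (Nat.add_sub_cancel' hn).symm]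
      rw [pow_add, pow_one]
    rw [hpow]; ring
  have hsplit : ∫ u in (0:ℝ)..1, (u * P + c) * (1 - u) ^ (n - 1)
      = P * (1/n - 1/((n:ℝ)+1)) + c * (1/n) := by
    rw [intervalIntegral.integral_congr (g := fun u =>
      P * ((1-u)^(n-1) - (1-u)^n) + c * (1-u)^(n-1)) (fun u _ => heq u)]
    have i1 : IntervalIntegrable (fun u : ℝ => (1-u)^(n-1)) volume 0 1 :=
      (by continuity : Continuous fun u : ℝ => (1-u)^(n-1)).intervalIntegrable _ _
    have i2 : IntervalIntegrable (fun u : ℝ => (1-u)^n) volume 0 1 :=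
      (by continuity : Continuous fun u : ℝ => (1-u)^n).intervalIntegrable _ _
    rw [intervalIntegral.integral_add ((i1.sub i2).const_mul _) (i1.const_mul _),
      intervalIntegral.integral_const_mul, intervalIntegral.integral_const_mul,
      intervalIntegral.integral_sub i1 i2, integral_one_sub_pow, integral_one_sub_pow]
    have hcast : ((n - 1 : ℕ) : ℝ) + 1 = n := by
      have : ((n - 1 : ℕ) : ℝ) = (n : ℝ) - 1 := by
        push_cast [hn]; ring
      rw [this]; ring
    rw [hcast]
  have hval : P * (1/(n:ℝ) - 1/((n:ℝ)+1)) + c * (1/n) = P / (n * (n + 1)) + c / n := by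
    have h1 : (1:ℝ)/n - 1/((n:ℝ)+1) = 1/(n*((n:ℝ)+1)) := by
      field_simp; ring
    rw [h1]; field_simp
  calc ∫ u in (0:ℝ)..(1/P), (u * P + c) * (1 - u) ^ (n - 1)
      ≤ ∫ u in (0:ℝ)..1, (u * P + c) * (1 - u) ^ (n - 1) := hmono
    _ = P * (1/n - 1/((n:ℝ)+1)) + c * (1/n) := hsplit
    _ = P / (n * (n + 1)) + c / n := hval

lemma measurable_rhoHMH (q : ℕ) : Measurable (rhoHMH q) := by
  have h1 : Measurable fun x : ℝ => -Real.logb 2 x := by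
    have : Measurable fun x : ℝ => Real.log x / Real.log 2 :=
      Real.measurable_log.div_const _
    exact this.neg
  exact (measurable_from_top (f := fun z : ℤ => min (z + 1) (2 ^ q))).comp h1.floor

lemma measurable_hatHMH (q r : ℕ) : Measurable (hatHMH q r) := by
  have h1 := measurable_rhoHMH q
  have h2 : Measurable fun x : ℝ => x * (2 : ℝ) ^ rhoHMH q x :=
    measurable_id.mul ((measurable_from_top (f := fun z : ℤ => (2 : ℝ) ^ z)).comp h1)
  have h3 : Measurable fun x : ℝ => sigmaHMH r (x * (2 : ℝ) ^ rhoHMH q x - 1) := by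
    have : Measurable fun x : ℝ => (x * (2 : ℝ) ^ rhoHMH q x - 1) * 2 ^ r :=
      ((h2.sub measurable_const).mul measurable_const)
    exact this.floor
  exact h1.prodMk h3

lemma hat_fiber_vol (q r p i : ℕ) (x' : ℝ) (hx : 0 < x') :
    volume {y : ℝ | hatHMH q r (y * 2 ^ p - i) = hatHMH q r x'} ≤
      ENNReal.ofReal ((x' + 1 / 2 ^ 2 ^ q) / (2 ^ r * 2 ^ p)) := by
  have hPpos : (0:ℝ) < 2 ^ p := by positivity
  have hRpos : (0:ℝ) < 2 ^ r := by positivity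
  set ρ : ℤ := rhoHMH q x' with hρdef
  set k : ℤ := sigmaHMH r (x' * (2:ℝ) ^ ρ - 1) with hkdef
  have hrho_pos : (0:ℝ) < (2:ℝ) ^ ρ := zpow_pos (by norm_num) _
  set c : ℝ := ((1 + (k : ℝ) / 2 ^ r) * ((2:ℝ) ^ ρ)⁻¹ + i) / 2 ^ p with hcdef
  set d : ℝ := ((1 + ((k : ℝ) + 1) / 2 ^ r) * ((2:ℝ) ^ ρ)⁻¹ + i) / 2 ^ p with hddef
  have hsub : {y : ℝ | hatHMH q r (y * 2 ^ p - i) = hatHMH q r x'} ⊆ Set.Ico c d := by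
    intro y hy
    simp only [Set.mem_setOf_eq] at hy
    have h1 : rhoHMH q (y * 2 ^ p - i) = ρ := congrArg Prod.fst hy
    have h2 : sigmaHMH r ((y * 2 ^ p - i) * (2:ℝ) ^ rhoHMH q (y * 2 ^ p - i) - 1) = k :=
      congrArg Prod.snd hy
    rw [h1] at h2
    have h3 := Int.floor_eq_iff.mp h2
    obtain ⟨h3l, h3r⟩ := h3
    have e1 : (k : ℝ) / 2 ^ r ≤ (y * 2 ^ p - i) * (2:ℝ) ^ ρ - 1 :=
      (div_le_iff₀ hRpos).mpr (by linarith)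
    have e2 : (y * 2 ^ p - i) * (2:ℝ) ^ ρ - 1 < ((k : ℝ) + 1) / 2 ^ r := by
      rw [lt_div_iff₀ hRpos]; push_cast at h3r ⊢; linarith
    constructor
    · rw [hcdef, div_le_iff₀ hPpos]
      have : (1 + (k : ℝ) / 2 ^ r) * ((2:ℝ) ^ ρ)⁻¹ ≤ y * 2 ^ p - i := by
        rw [← div_eq_mul_inv, div_le_iff₀ hrho_pos]; linarith
      linarith
    · rw [hddef, lt_div_iff₀ hPpos]
      have : y * 2 ^ p - i < (1 + ((k : ℝ) + 1) / 2 ^ r) * ((2:ℝ) ^ ρ)⁻¹ := by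
        rw [← div_eq_mul_inv, lt_div_iff₀ hrho_pos]; linarith
      linarith
  have hbound : ((2:ℝ) ^ ρ)⁻¹ ≤ x' + 1 / 2 ^ 2 ^ q := by
    rcases min_cases (⌊-Real.logb 2 x'⌋ + 1) ((2:ℤ) ^ q) with ⟨he, _⟩ | ⟨he, _⟩
    · have hρ : ρ = ⌊-Real.logb 2 x'⌋ + 1 := by rw [hρdef, rhoHMH, he]
      have hxle : ((2:ℝ) ^ ρ)⁻¹ ≤ x' := by
        have h0 : ((2:ℝ) ^ ρ)⁻¹ = (2:ℝ) ^ (-ρ : ℤ) := by rw [zpow_neg]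
        have hexp : ((-ρ : ℤ) : ℝ) ≤ Real.logb 2 x' := by
          have := Int.lt_floor_add_one (-Real.logb 2 x')
          rw [hρ]; push_cast; linarith
        calc ((2:ℝ) ^ ρ)⁻¹ = (2:ℝ) ^ ((-ρ : ℤ) : ℝ) := by rw [Real.rpow_intCast, h0]
          _ ≤ (2:ℝ) ^ Real.logb 2 x' :=
            Real.rpow_le_rpow_of_exponent_le one_le_two hexp
          _ = x' := Real.rpow_logb (by norm_num) (by norm_num) hx
      have : (0:ℝ) < 1 / 2 ^ 2 ^ q := by positivity
      linarith
    · have hρ : ρ = (2:ℤ) ^ q := by rw [hρdef, rhoHMH, he]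
      have : ((2:ℝ) ^ ρ)⁻¹ = 1 / 2 ^ 2 ^ q := by
        rw [hρ, one_div]
        norm_cast
      rw [this]; linarith
  calc volume {y : ℝ | hatHMH q r (y * 2 ^ p - i) = hatHMH q r x'}
      ≤ volume (Set.Ico c d) := measure_mono hsub
    _ = ENNReal.ofReal (d - c) := Real.volume_Ico
    _ ≤ ENNReal.ofReal ((x' + 1 / 2 ^ 2 ^ q) / (2 ^ r * 2 ^ p)) := by
        apply ENNReal.ofReal_le_ofReal
        have hdc : d - c = ((2:ℝ) ^ ρ)⁻¹ / (2 ^ r * 2 ^ p) := by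
          rw [hddef, hcdef]; field_simp; ring
        rw [hdc]
        gcongr

lemma key_bound {Ω ι : Type*} [MeasurableSpace Ω] [DecidableEq ι]
    (μ : Measure Ω) [IsProbabilityMeasure μ]
    (F : Finset ι) (h : ι → Ω → ℝ)
    (hmeas : ∀ j ∈ F, Measurable (h j))
    (hindep : iIndepFun (fun j : F => h j) μ)
    (hunif : ∀ j ∈ F, Measure.map (h j) μ = volume.restrict (Set.Icc (0:ℝ) 1))
    (p q r i : ℕ) (hi : i < 2 ^ p)
    (A : Finset ι) (hAF : A ⊆ F) (s t : ι) (hs : s ∈ A) (htF : t ∈ F) (htA : t ∉ A) :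
    μ {ω | ((i:ℝ)/2^p < h s ω ∧ h s ω < ((i:ℝ)+1)/2^p)
        ∧ (∀ s' ∈ A, ¬((i:ℝ)/2^p < h s' ω ∧ h s' ω < h s ω))
        ∧ hatHMH q r (h t ω * 2^p - i) = hatHMH q r (h s ω * 2^p - i)}
      ≤ ENNReal.ofReal ((2^p/((A.card : ℝ)*(A.card+1)) + (1/2^(2^q))/A.card)
          / (2^r * 2^p)) := by
  have hPpos : (0:ℝ) < 2 ^ p := by positivity
  set lo : ℝ := (i:ℝ)/2^p with hlodef
  set hi' : ℝ := ((i:ℝ)+1)/2^p with hhidef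
  have hlo0 : 0 ≤ lo := by positivity
  have hhi1 : hi' ≤ 1 := by
    rw [hhidef, div_le_one hPpos]
    have : (i:ℝ) + 1 ≤ (2:ℝ)^p := by exact_mod_cast Nat.succ_le_of_lt hi
    linarith
  have hst : s ≠ t := fun he => htA (he ▸ hs)
  set s' : ↥F := ⟨s, hAF hs⟩ with hs'def
  set t' : ↥F := ⟨t, htF⟩ with ht'def
  set TA : Finset ↥F := (A.erase s).attach.map
    ⟨fun a => (⟨a.1, hAF (A.erase_subset s a.2)⟩ : ↥F),
     by intro a b hab; exact Subtype.ext (by simpa using hab)⟩ with hTAdef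
  have mem_TA : ∀ j : ↥F, j ∈ TA ↔ (j : ι) ∈ A.erase s := by
    intro j
    constructor
    · intro hj
      rw [hTAdef, Finset.mem_map] at hj
      obtain ⟨a, _, ha⟩ := hj
      rw [← ha]
      exact a.2
    · intro hj
      rw [hTAdef, Finset.mem_map]
      exact ⟨⟨(j : ι), hj⟩, Finset.mem_attach _ _, Subtype.ext rfl⟩
  set T : Finset ↥F := insert t' TA with hTdef
  have ht'TA : t' ∉ TA := by
    rw [mem_TA]
    intro hc
    exact htA (Finset.mem_of_mem_erase hc)
  have hsT : s' ∉ T := by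
    rw [hTdef, Finset.mem_insert]
    rintro (he | he)
    · exact hst (congrArg Subtype.val he)
    · rw [mem_TA] at he
      exact (Finset.mem_erase.mp he).1 rfl
  have hdisjT : Disjoint ({s'} : Finset ↥F) T := Finset.disjoint_singleton_left.mpr hsT
  have hmeas' : ∀ j : ↥F, Measurable (h j) := fun j => hmeas j j.2
  set W : Ω → (↥T → ℝ) := fun ω j => h (j : ↥F) ω with hWdef
  have hWmeas : Measurable W := measurable_pi_lambda _ (fun j => hmeas' j.1)
  have hIndep2 : IndepFun (h s) W μ := by
    have h1 := hindep.indepFun_finset {s'} T hdisjT hmeas'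
    exact h1.comp (φ := fun v : (({s'} : Finset ↥F) → ℝ) =>
      v ⟨s', Finset.mem_singleton_self s'⟩) (measurable_pi_apply _) measurable_id
  set c0 : ℝ := 1/2^(2^q) with hc0def
  set B : ↥F → ℝ → Set ℝ := fun j x =>
    if (j : ι) = t then {y | hatHMH q r (y * 2^p - i) = hatHMH q r (x * 2^p - i)}
    else {y | ¬(lo < y ∧ y < x)} with hBdef
  have hBmeas : ∀ (j : ↥F) (x : ℝ), MeasurableSet (B j x) := by
    intro j x
    simp only [hBdef]
    split_ifs
    · have : Measurable fun y : ℝ => hatHMH q r (y * 2^p - i) :=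
        (measurable_hatHMH q r).comp ((measurable_id.mul_const _).sub measurable_const)
      exact this (MeasurableSet.singleton _)
    · have : {y : ℝ | ¬(lo < y ∧ y < x)} = (Set.Ioo lo x)ᶜ := rfl
      rw [this]
      exact measurableSet_Ioo.compl
  set G : Set (ℝ × (↥T → ℝ)) :=
    {z | (lo < z.1 ∧ z.1 < hi') ∧ ∀ j : ↥T, z.2 j ∈ B j.1 z.1} with hGdef
  have hGmeas : MeasurableSet G := by
    have hGeq : G = ({z : ℝ × (↥T → ℝ) | lo < z.1 ∧ z.1 < hi'} ∩
        ⋂ j : ↥T, {z : ℝ × (↥T → ℝ) | z.2 j ∈ B j.1 z.1}) := by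
      ext z
      simp only [hGdef, Set.mem_setOf_eq, Set.mem_inter_iff, Set.mem_iInter]
    rw [hGeq]
    apply MeasurableSet.inter
    · exact (measurableSet_lt measurable_const measurable_fst).inter
        (measurableSet_lt measurable_fst measurable_const)
    · apply MeasurableSet.iInter
      intro j
      by_cases hj : ((j : ↥F) : ι) = t
      · have heq2 : {z : ℝ × (↥T → ℝ) | z.2 j ∈ B j.1 z.1}
            = {z : ℝ × (↥T → ℝ) |
                hatHMH q r (z.2 j * 2^p - i) = hatHMH q r (z.1 * 2^p - i)} := by
          ext z; simp only [hBdef, Set.mem_setOf_eq, if_pos hj]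
        rw [heq2]
        apply measurableSet_eq_fun
        · exact (measurable_hatHMH q r).comp
            ((measurable_snd.eval.mul_const _).sub measurable_const)
        · exact (measurable_hatHMH q r).comp
            ((measurable_fst.mul_const _).sub measurable_const)
      · have heq2 : {z : ℝ × (↥T → ℝ) | z.2 j ∈ B j.1 z.1}
            = ({z : ℝ × (↥T → ℝ) | lo < z.2 j} ∩ {z | z.2 j < z.1})ᶜ := by
          ext z; simp only [hBdef, Set.mem_setOf_eq, if_neg hj, Set.mem_compl_iff,
            Set.mem_inter_iff]
        rw [heq2]
        have m1 : Measurable fun z : ℝ × (↥T → ℝ) => z.2 j := measurable_snd.eval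
        have m2 : MeasurableSet {z : ℝ × (↥T → ℝ) | lo < z.2 j} :=
          measurableSet_lt measurable_const m1
        have m3 : MeasurableSet {z : ℝ × (↥T → ℝ) | z.2 j < z.1} :=
          measurableSet_lt m1 measurable_fst
        exact (m2.inter m3).compl
  have hE : {ω | (lo < h s ω ∧ h s ω < hi')
        ∧ (∀ s'' ∈ A, ¬(lo < h s'' ω ∧ h s'' ω < h s ω))
        ∧ hatHMH q r (h t ω * 2^p - i) = hatHMH q r (h s ω * 2^p - i)}
      = (fun ω => (h s ω, W ω)) ⁻¹' G := by
    ext ω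
    simp only [Set.mem_setOf_eq, Set.mem_preimage, hGdef]
    constructor
    · rintro ⟨hb, hmin, hhat⟩
      refine ⟨hb, ?_⟩
      rintro ⟨j, hjT⟩
      by_cases hj : ((j : ι)) = t
      · simp only [hBdef, if_pos hj, Set.mem_setOf_eq, hWdef]
        rw [hj]
        exact hhat
      · simp only [hBdef, if_neg hj, Set.mem_setOf_eq, hWdef]
        have hjTA : j ∈ TA := by
          rcases Finset.mem_insert.mp hjT with he | he
          · exact absurd (congrArg Subtype.val he) hj
          · exact he
        exact hmin _ (Finset.mem_of_mem_erase ((mem_TA j).mp hjTA))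
    · rintro ⟨hb, hall⟩
      refine ⟨hb, ?_, ?_⟩
      · intro s'' hs''
        by_cases hss : s'' = s
        · subst hss
          rintro ⟨_, hlt⟩
          exact lt_irrefl _ hlt
        · have hmem : s'' ∈ A.erase s := Finset.mem_erase.mpr ⟨hss, hs''⟩
          have hjTA : (⟨s'', hAF hs''⟩ : ↥F) ∈ TA := (mem_TA _).mpr hmem
          have hcond := hall ⟨⟨s'', hAF hs''⟩, Finset.mem_insert_of_mem hjTA⟩
          simp only [hBdef, Set.mem_setOf_eq, hWdef] at hcond
          rw [if_neg (show s'' ≠ t from fun he => htA (he ▸ hs''))] at hcond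
          exact hcond
      · have hcond := hall ⟨t', Finset.mem_insert_self _ _⟩
        simp only [hBdef, Set.mem_setOf_eq, hWdef, ht'def, if_pos] at hcond
        exact hcond
  set ν : Measure ℝ := volume.restrict (Set.Icc (0:ℝ) 1) with hνdef
  haveI hνprob : IsProbabilityMeasure ν := by
    constructor
    rw [hνdef, Measure.restrict_apply_univ, Real.volume_Icc]
    norm_num
  have hpairmeas : Measurable fun ω => (h s ω, W ω) := (hmeas s (hAF hs)).prodMk hWmeas
  haveI : IsProbabilityMeasure (μ.map W) := Measure.isProbabilityMeasure_map hWmeas.aemeasurable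
  have hmapeq : μ.map (fun ω => (h s ω, W ω)) = (μ.map (h s)).prod (μ.map W) :=
    (indepFun_iff_map_prod_eq_prod_map_map (hmeas s (hAF hs)).aemeasurable
      hWmeas.aemeasurable).mp hIndep2
  have hμE : μ ((fun ω => (h s ω, W ω)) ⁻¹' G)
      = ∫⁻ x, (μ.map W) (Prod.mk x ⁻¹' G) ∂ν := by
    rw [← Measure.map_apply hpairmeas hGmeas, hmapeq, hunif s (hAF hs),
      Measure.prod_apply hGmeas]
  set n : ℕ := A.card with hndef
  have hn1 : 1 ≤ n := Finset.card_pos.mpr ⟨s, hs⟩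
  set g : ℝ → ℝ := fun x =>
    ((x * 2^p - i + c0) / (2^r * 2^p)) * (1 - (x - lo)) ^ (n - 1) with hgdef
  have hdiff : hi' - lo = 1/2^p := by rw [hhidef, hlodef]; ring
  have h2p1 : (1:ℝ) ≤ 2^p := by
    have : ((1:ℕ):ℝ) ≤ ((2^p : ℕ):ℝ) := by exact_mod_cast Nat.one_le_two_pow
    push_cast at this
    linarith
  have hsect_le : ∀ x : ℝ, (μ.map W) (Prod.mk x ⁻¹' G)
      ≤ (Set.Ioo lo hi').indicator (fun x => ENNReal.ofReal (g x)) x := by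
    intro x
    by_cases hx : lo < x ∧ x < hi'
    case neg =>
      have hempty : Prod.mk x ⁻¹' G = ∅ := by
        ext w
        simp only [hGdef, Set.mem_preimage, Set.mem_setOf_eq, Set.mem_empty_iff_false,
          iff_false]
        tauto
      simp [hempty]
    case pos =>
      have hx2pi : 0 < x * 2^p - i := by
        have := (div_lt_iff₀ hPpos).mp hx.1
        linarith
      have hxlo0 : (0:ℝ) ≤ x - lo := le_of_lt (sub_pos.mpr hx.1)
      have hxlo1 : (0:ℝ) ≤ 1 - (x - lo) := by
        have : x - lo < 1/2^p := by linarith [hx.2, hdiff]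
        have h1p : (1:ℝ)/2^p ≤ 1 := by
          rw [div_le_one hPpos]; exact h2p1
        linarith
      have hsect : Prod.mk x ⁻¹' G = ⋂ j : ↥T, (fun w : ↥T → ℝ => w j) ⁻¹' B j.1 x := by
        ext w
        simp only [hGdef, Set.mem_preimage, Set.mem_setOf_eq, Set.mem_iInter]
        exact ⟨fun hw => hw.2, fun hw => ⟨hx, hw⟩⟩
      have hsectmeas : MeasurableSet (⋂ j : ↥T, (fun w : ↥T → ℝ => w j) ⁻¹' B j.1 x) :=
        MeasurableSet.iInter fun j => measurable_pi_apply j (hBmeas j.1 x)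
      have hpre : W ⁻¹' (⋂ j : ↥T, (fun w : ↥T → ℝ => w j) ⁻¹' B j.1 x)
          = ⋂ j ∈ T, (fun ω => h (j : ι) ω) ⁻¹' B j x := by
        ext ω
        simp only [Set.mem_preimage, Set.mem_iInter, hWdef]
        exact ⟨fun hw j hj => hw ⟨j, hj⟩, fun hw j => hw j.1 j.2⟩
      have hprod := hindep.measure_inter_preimage_eq_mul T (sets := fun j => B j x)
          (fun j _ => hBmeas j x)
      rw [hsect, Measure.map_apply hWmeas hsectmeas, hpre, hprod]
      have hfac : ∀ j ∈ T, μ ((fun ω => h (j : ι) ω) ⁻¹' B j x) = ν (B j x) := by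
        intro j hj
        rw [← Measure.map_apply (hmeas' j) (hBmeas j x), hunif j j.2, hνdef]
      rw [Finset.prod_congr rfl hfac, hTdef, Finset.prod_insert ht'TA]
      have hTAfac : ∀ j ∈ TA, ν (B j x) = ENNReal.ofReal (1 - (x - lo)) := by
        intro j hj
        have hjne : (j : ι) ≠ t := fun he =>
          htA (he ▸ Finset.mem_of_mem_erase ((mem_TA j).mp hj))
        simp only [hBdef, if_neg hjne]
        have hset : {y : ℝ | ¬(lo < y ∧ y < x)} = (Set.Ioo lo x)ᶜ := rfl
        rw [hset, measure_compl measurableSet_Ioo (measure_ne_top _ _), measure_univ]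
        have hsub : Set.Ioo lo x ⊆ Set.Icc (0:ℝ) 1 := by
          intro y hy
          exact ⟨le_of_lt (lt_of_le_of_lt hlo0 hy.1),
            le_trans (le_of_lt (lt_trans hy.2 hx.2)) hhi1⟩
        rw [hνdef, Measure.restrict_apply measurableSet_Ioo,
          Set.inter_eq_self_of_subset_left hsub, Real.volume_Ioo,
          ← ENNReal.ofReal_one, ← ENNReal.ofReal_sub _ hxlo0]
      rw [Finset.prod_congr rfl hTAfac, Finset.prod_const]
      have hcardTA : TA.card = n - 1 := by
        rw [hTAdef, Finset.card_map, Finset.card_attach, Finset.card_erase_of_mem hs,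
          hndef]
      rw [hcardTA]
      have htfac : ν (B t' x) ≤ ENNReal.ofReal ((x * 2^p - i + c0) / (2^r * 2^p)) := by
        have ht't : ((t' : ↥F) : ι) = t := rfl
        simp only [hBdef, if_pos ht't]
        calc ν {y : ℝ | hatHMH q r (y * 2^p - i) = hatHMH q r (x * 2^p - i)}
            ≤ volume {y : ℝ | hatHMH q r (y * 2^p - i) = hatHMH q r (x * 2^p - i)} := by
              rw [hνdef]
              exact Measure.restrict_apply_le _ _
          _ ≤ ENNReal.ofReal ((x * 2^p - i + c0) / (2^r * 2^p)) := by
              have := hat_fiber_vol q r p i (x * 2^p - i) hx2pi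
              rw [hc0def]
              exact this
      have hfrac0 : (0:ℝ) ≤ (x * 2^p - i + c0) / (2^r * 2^p) := by
        have hc00 : (0:ℝ) ≤ c0 := by rw [hc0def]; positivity
        apply div_nonneg (by linarith) (by positivity)
      calc ν (B t' x) * ENNReal.ofReal (1 - (x - lo)) ^ (n - 1)
          ≤ ENNReal.ofReal ((x * 2^p - i + c0) / (2^r * 2^p))
            * ENNReal.ofReal (1 - (x - lo)) ^ (n - 1) := mul_le_mul_left htfac _
        _ = ENNReal.ofReal (g x) := by
            rw [← ENNReal.ofReal_pow hxlo1, ← ENNReal.ofReal_mul hfrac0, hgdef]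
        _ = (Set.Ioo lo hi').indicator (fun x => ENNReal.ofReal (g x)) x := by
            rw [Set.indicator_of_mem (Set.mem_Ioo.mpr hx)]
  have hgcont : Continuous g := by
    rw [hgdef]
    exact ((((continuous_id.mul continuous_const).sub continuous_const).add
      continuous_const).div_const _).mul
      ((continuous_const.sub (continuous_id.sub continuous_const)).pow _)
  have hgint : IntegrableOn g (Set.Ioo lo hi') volume :=
    (hgcont.integrableOn_Icc).mono_set Set.Ioo_subset_Icc_self
  have hgnn : 0 ≤ᵐ[volume.restrict (Set.Ioo lo hi')] g := by
    filter_upwards [ae_restrict_mem measurableSet_Ioo] with x hx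
    have hx2pi : 0 ≤ x * 2^p - i := by
      have := (div_lt_iff₀ hPpos).mp hx.1
      linarith
    have hxlo1 : (0:ℝ) ≤ 1 - (x - lo) := by
      have h1 : x - lo < 1/2^p := by linarith [hx.2, hdiff]
      have h1p : (1:ℝ)/2^p ≤ 1 := by rw [div_le_one hPpos]; exact h2p1
      linarith
    rw [hgdef]
    have hc00 : (0:ℝ) ≤ c0 := by rw [hc0def]; positivity
    apply mul_nonneg (div_nonneg (by linarith) (by positivity)) (pow_nonneg hxlo1 _)
  have hreal : ∫ x in Set.Ioo lo hi', g x ∂volume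
      ≤ (2^p/((n : ℝ)*(n+1)) + c0/n) / (2^r * 2^p) := by
    have hloh : lo ≤ hi' := by
      rw [hlodef, hhidef]
      gcongr
      linarith
    have h1 : ∫ x in Set.Ioo lo hi', g x ∂volume = ∫ x in lo..hi', g x := by
      rw [intervalIntegral.integral_of_le hloh, ← MeasureTheory.integral_Ioc_eq_integral_Ioo]
    have h2 : ∫ x in lo..hi', g x = ∫ u in (0:ℝ)..(1/2^p), g (u + lo) := by
      rw [intervalIntegral.integral_comp_add_right g lo]
      congr 1
      · rw [zero_add]
      · rw [hhidef, hlodef]; ring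
    have hgu : ∀ u : ℝ, g (u + lo)
        = (1/(2^r*2^p)) * ((u * 2^p + c0) * (1-u)^(n - 1)) := by
      intro u
      have hlo2 : lo * 2^p = i := by rw [hlodef]; field_simp
      rw [hgdef]
      have e1 : (u + lo) * 2^p - i = u * 2^p := by rw [add_mul, hlo2]; ring
      simp only []
      rw [e1]
      have e2 : (1:ℝ) - (u + lo - lo) = 1 - u := by ring
      rw [e2]
      ring
    have h3 : ∫ u in (0:ℝ)..(1/2^p), g (u + lo)
        = (1/(2^r*2^p)) * ∫ u in (0:ℝ)..(1/2^p), (u * 2^p + c0) * (1-u)^(n - 1) := by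
      rw [intervalIntegral.integral_congr (g := fun u =>
        (1/(2^r*2^p)) * ((u * 2^p + c0) * (1-u)^(n - 1))) (fun u _ => hgu u),
        intervalIntegral.integral_const_mul]
    have hc00 : (0:ℝ) ≤ c0 := by rw [hc0def]; positivity
    have h4 := calc1 n hn1 c0 (2^p) hc00 h2p1
    rw [h1, h2, h3]
    calc (1/((2:ℝ)^r*2^p)) * ∫ u in (0:ℝ)..(1/2^p), (u * 2^p + c0) * (1-u)^(n - 1)
        ≤ (1/((2:ℝ)^r*2^p)) * (2^p/((n:ℝ)*(n+1)) + c0/n) :=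
          mul_le_mul_of_nonneg_left h4 (by positivity)
      _ = (2^p/((n : ℝ)*(n+1)) + c0/n) / (2^r * 2^p) := by ring
  calc μ {ω | (lo < h s ω ∧ h s ω < hi')
        ∧ (∀ s'' ∈ A, ¬(lo < h s'' ω ∧ h s'' ω < h s ω))
        ∧ hatHMH q r (h t ω * 2^p - i) = hatHMH q r (h s ω * 2^p - i)}
      = ∫⁻ x, (μ.map W) (Prod.mk x ⁻¹' G) ∂ν := by rw [hE, hμE]
    _ ≤ ∫⁻ x, (Set.Ioo lo hi').indicator (fun x => ENNReal.ofReal (g x)) x ∂ν :=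
        lintegral_mono hsect_le
    _ = ∫⁻ x in Set.Ioo lo hi', ENNReal.ofReal (g x) ∂ν := by
        rw [lintegral_indicator measurableSet_Ioo]
    _ ≤ ∫⁻ x in Set.Ioo lo hi', ENNReal.ofReal (g x) ∂volume := by
        apply lintegral_mono'
        · rw [hνdef]
          exact Measure.restrict_mono (le_refl _) Measure.restrict_le_self
        · exact le_rfl
    _ = ENNReal.ofReal (∫ x in Set.Ioo lo hi', g x ∂volume) :=
        (ofReal_integral_eq_lintegral_ofReal hgint hgnn).symm
    _ ≤ ENNReal.ofReal ((2^p/((n : ℝ)*(n+1)) + (1/2^(2^q))/n) / (2^r * 2^p)) := by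
        apply ENNReal.ofReal_le_ofReal
        rw [← hc0def]
        exact hreal

/-- **Expected number of HyperMinHash bucket collisions** (Theorem `thm:main`):
for disjoint sets `A`, `B` with `|A| = n ≥ 1`, `|B| = m ≥ 1`, `m ≤ n ≤ 2^{2^q + r}`,
and independent uniform-`[0,1]` hashes on `A ∪ B`, the total number of bucket
collisions `C = ∑_{i<2^p} Z_i` satisfies `E[C] ≤ 2^p (5/2^r + n/2^{p + 2^q + r})`. -/
theorem hyperminhash_expected_collisions_bound
    {Ω ι : Type*} [MeasurableSpace Ω] [DecidableEq ι]
    (μ : Measure Ω) [IsProbabilityMeasure μ]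
    (p q r : ℕ) (n m : ℕ)
    (A B : Finset ι) (hdisj : Disjoint A B)
    (hcardA : A.card = n) (hcardB : B.card = m)
    (hm : 1 ≤ m) (hmn : m ≤ n) (hnb : n ≤ 2 ^ (2 ^ q + r))
    (h : ι → Ω → ℝ)
    (hmeas : ∀ s ∈ A ∪ B, Measurable (h s))
    (hindep : iIndepFun (fun s : ↥(A ∪ B) => h s) μ)
    (hunif : ∀ s ∈ A ∪ B, Measure.map (h s) μ = volume.restrict (Set.Icc (0 : ℝ) 1))
    (C : Ω → ℝ)
    (hC : C = fun ω => ∑ i ∈ Finset.range (2 ^ p),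
      if bucketOccupied h p A i ω ∧ bucketOccupied h p B i ω
          ∧ hatHMH q r (bucketMin h p A i ω) = hatHMH q r (bucketMin h p B i ω)
        then (1 : ℝ) else 0) :
    ∫ ω, C ω ∂μ ≤ 2 ^ p * (5 / 2 ^ r + (n : ℝ) / 2 ^ (p + 2 ^ q + r)) := by
  -- the events
  set E : ℕ → ι → ι → Set Ω := fun i s t =>
    {ω | ((i:ℝ)/2^p < h s ω ∧ h s ω < ((i:ℝ)+1)/2^p)
        ∧ (∀ s' ∈ A, ¬((i:ℝ)/2^p < h s' ω ∧ h s' ω < h s ω))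
        ∧ hatHMH q r (h t ω * 2^p - i) = hatHMH q r (h s ω * 2^p - i)} with hEdef
  have hmeasE : ∀ (i : ℕ), ∀ s ∈ A, ∀ t ∈ B, MeasurableSet (E i s t) := by
    intro i s hsA t htB
    have hms : Measurable (h s) := hmeas s (Finset.mem_union_left _ hsA)
    have hmt : Measurable (h t) := hmeas t (Finset.mem_union_right _ htB)
    have h1 : MeasurableSet {ω | ((i:ℝ)/2^p < h s ω ∧ h s ω < ((i:ℝ)+1)/2^p)} :=
      (measurableSet_lt measurable_const hms).inter (measurableSet_lt hms measurable_const)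
    have h2 : MeasurableSet {ω | ∀ s' ∈ A, ¬((i:ℝ)/2^p < h s' ω ∧ h s' ω < h s ω)} := by
      have : {ω | ∀ s' ∈ A, ¬((i:ℝ)/2^p < h s' ω ∧ h s' ω < h s ω)}
          = ⋂ s' ∈ A, ({ω | (i:ℝ)/2^p < h s' ω} ∩ {ω | h s' ω < h s ω})ᶜ := by
        ext ω
        simp only [Set.mem_setOf_eq, Set.mem_iInter, Set.mem_compl_iff, Set.mem_inter_iff]
      rw [this]
      refine MeasurableSet.biInter A.countable_toSet fun s' hs' => ?_
      have hms' : Measurable (h s') := hmeas s' (Finset.mem_union_left _ hs')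
      exact ((measurableSet_lt measurable_const hms').inter
        (measurableSet_lt hms' hms)).compl
    have h3 : MeasurableSet
        {ω | hatHMH q r (h t ω * 2^p - i) = hatHMH q r (h s ω * 2^p - i)} := by
      apply measurableSet_eq_fun
      · exact (measurable_hatHMH q r).comp ((hmt.mul_const _).sub measurable_const)
      · exact (measurable_hatHMH q r).comp ((hms.mul_const _).sub measurable_const)
    exact (h1.inter (h2.inter h3)).congr rfl |>.congr rfl
  set C' : Ω → ℝ := fun ω => ∑ i ∈ Finset.range (2 ^ p), ∑ s ∈ A, ∑ t ∈ B,
    (E i s t).indicator (fun _ => (1:ℝ)) ω with hC'def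
  have hPpos : (0:ℝ) < 2^p := by positivity
  have hle : ∀ ω, C ω ≤ C' ω := by
    intro ω
    rw [hC, hC'def]
    apply Finset.sum_le_sum
    intro i _
    split_ifs with hz
    case neg =>
      apply Finset.sum_nonneg
      intro s _
      apply Finset.sum_nonneg
      intro t _
      exact Set.indicator_nonneg (fun _ _ => zero_le_one) ω
    case pos =>
      obtain ⟨hoccA, hoccB, hhat⟩ := hz
      -- extract the argmin of A in bucket i
      have hminA : ∃ s₀ ∈ A, ((i:ℝ)/2^p < h s₀ ω ∧ h s₀ ω < ((i:ℝ)+1)/2^p)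
          ∧ bucketMin h p A i ω = h s₀ ω * 2^p - i
          ∧ ∀ s' ∈ A, ¬((i:ℝ)/2^p < h s' ω ∧ h s' ω < h s₀ ω) := by
        obtain ⟨sa, hsaA, hsab⟩ := hoccA
        set SA : Set ℝ := {x : ℝ | ∃ s ∈ A, ((i : ℝ) / 2 ^ p < h s ω ∧
          h s ω < ((i : ℝ) + 1) / 2 ^ p) ∧ x = h s ω * 2 ^ p - i} with hSAdef
        have hSAfin : SA.Finite := by
          apply Set.Finite.subset (A.image (fun s => h s ω * 2^p - i)).finite_toSet
          rintro x ⟨s, hsA, _, hx⟩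
          simp only [Finset.coe_image, Set.mem_image, Finset.mem_coe]
          exact ⟨s, hsA, hx.symm⟩
        have hSAne : SA.Nonempty := ⟨h sa ω * 2^p - i, sa, hsaA, hsab, rfl⟩
        have hmem : bucketMin h p A i ω ∈ SA := hSAne.csInf_mem hSAfin
        obtain ⟨s₀, hs₀A, hbuck₀, hX⟩ := hmem
        refine ⟨s₀, hs₀A, hbuck₀, hX, ?_⟩
        rintro s' hs' ⟨hlt1, hlt2⟩
        have hmem' : h s' ω * 2^p - i ∈ SA :=
          ⟨s', hs', ⟨hlt1, lt_trans hlt2 hbuck₀.2⟩, rfl⟩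
        have hle' := csInf_le hSAfin.bddBelow hmem'
        have : bucketMin h p A i ω ≤ h s' ω * 2^p - i := hle'
        rw [hX] at this
        nlinarith
      have hminB : ∃ t₀ ∈ B, ((i:ℝ)/2^p < h t₀ ω ∧ h t₀ ω < ((i:ℝ)+1)/2^p)
          ∧ bucketMin h p B i ω = h t₀ ω * 2^p - i := by
        obtain ⟨ta, htaB, htab⟩ := hoccB
        set SB : Set ℝ := {x : ℝ | ∃ s ∈ B, ((i : ℝ) / 2 ^ p < h s ω ∧
          h s ω < ((i : ℝ) + 1) / 2 ^ p) ∧ x = h s ω * 2 ^ p - i} with hSBdef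
        have hSBfin : SB.Finite := by
          apply Set.Finite.subset (B.image (fun s => h s ω * 2^p - i)).finite_toSet
          rintro x ⟨s, hsA, _, hx⟩
          simp only [Finset.coe_image, Set.mem_image, Finset.mem_coe]
          exact ⟨s, hsA, hx.symm⟩
        have hSBne : SB.Nonempty := ⟨h ta ω * 2^p - i, ta, htaB, htab, rfl⟩
        have hmem : bucketMin h p B i ω ∈ SB := hSBne.csInf_mem hSBfin
        obtain ⟨t₀, ht₀B, hbuck₀, hY⟩ := hmem
        exact ⟨t₀, ht₀B, hbuck₀, hY⟩
      obtain ⟨s₀, hs₀A, hbuck₀, hX, hmin⟩ := hminA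
      obtain ⟨t₀, ht₀B, _, hY⟩ := hminB
      have hωE : ω ∈ E i s₀ t₀ := by
        refine ⟨hbuck₀, hmin, ?_⟩
        rw [← hX, ← hY]
        exact hhat.symm
      have hind1 : (E i s₀ t₀).indicator (fun _ => (1:ℝ)) ω = 1 :=
        Set.indicator_of_mem hωE _
      calc (1:ℝ) = (E i s₀ t₀).indicator (fun _ => (1:ℝ)) ω := hind1.symm
        _ ≤ ∑ t ∈ B, (E i s₀ t).indicator (fun _ => (1:ℝ)) ω :=
            Finset.single_le_sum
              (fun t _ => Set.indicator_nonneg (fun _ _ => zero_le_one) ω) ht₀B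
        _ ≤ ∑ s ∈ A, ∑ t ∈ B, (E i s t).indicator (fun _ => (1:ℝ)) ω :=
            Finset.single_le_sum (fun s _ => Finset.sum_nonneg
              (fun t _ => Set.indicator_nonneg (fun _ _ => zero_le_one) ω)) hs₀A
  have hintE : ∀ (i : ℕ), ∀ s ∈ A, ∀ t ∈ B,
      Integrable ((E i s t).indicator (fun _ => (1:ℝ))) μ := by
    intro i s hsA t htB
    exact (integrable_const (1:ℝ)).indicator (hmeasE i s hsA t htB)
  have hC'int : Integrable C' μ := by
    rw [hC'def]
    apply integrable_finset_sum
    intro i _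
    apply integrable_finset_sum
    intro s hsA
    apply integrable_finset_sum
    intro t htB
    exact hintE i s hsA t htB
  have hCnn : 0 ≤ᵐ[μ] C := by
    apply Filter.Eventually.of_forall
    intro ω
    rw [hC]
    apply Finset.sum_nonneg
    intro i _
    split_ifs <;> norm_num
  -- the per-triple real bound
  set bR : ℝ := (2^p/((n : ℝ)*(n+1)) + (1/2^(2^q))/n) / (2^r * 2^p) with hbRdef
  have hn1 : (1:ℕ) ≤ n := le_trans hm hmn
  have hbR0 : 0 ≤ bR := by
    rw [hbRdef]
    have : (0:ℝ) < n := by exact_mod_cast hn1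
    positivity
  have hkey : ∀ i < 2^p, ∀ s ∈ A, ∀ t ∈ B, (μ (E i s t)).toReal ≤ bR := by
    intro i hi s hsA t htB
    apply ENNReal.toReal_le_of_le_ofReal hbR0
    have htA' : t ∉ A := fun htA'' => (Finset.disjoint_left.mp hdisj htA'') htB
    have hb := key_bound μ (A ∪ B) h hmeas hindep hunif p q r i hi A
      Finset.subset_union_left s t hsA (Finset.mem_union_right _ htB) htA'
    rw [hcardA] at hb
    exact hb
  calc ∫ ω, C ω ∂μ ≤ ∫ ω, C' ω ∂μ :=
        integral_mono_of_nonneg hCnn hC'int (Filter.Eventually.of_forall hle)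
    _ = ∑ i ∈ Finset.range (2 ^ p), ∑ s ∈ A, ∑ t ∈ B, (μ (E i s t)).toReal := by
        rw [hC'def, integral_finset_sum _ (fun i _ => integrable_finset_sum _
          (fun s hsA => integrable_finset_sum _ (fun t htB => hintE i s hsA t htB)))]
        refine Finset.sum_congr rfl fun i _ => ?_
        rw [integral_finset_sum _ (fun s hsA => integrable_finset_sum _
          (fun t htB => hintE i s hsA t htB))]
        refine Finset.sum_congr rfl fun s hsA => ?_
        rw [integral_finset_sum _ (fun t htB => hintE i s hsA t htB)]
        refine Finset.sum_congr rfl fun t htB => ?_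
        exact integral_indicator_one (hmeasE i s hsA t htB)
    _ ≤ ∑ i ∈ Finset.range (2 ^ p), ∑ s ∈ A, ∑ t ∈ B, bR := by
        refine Finset.sum_le_sum fun i hi => Finset.sum_le_sum fun s hsA =>
          Finset.sum_le_sum fun t htB => ?_
        exact hkey i (Finset.mem_range.mp hi) s hsA t htB
    _ = (2^p : ℝ) * n * m * bR := by
        rw [Finset.sum_const, Finset.sum_const, Finset.sum_const, Finset.card_range,
          hcardA, hcardB]
        push_cast
        ring
    _ ≤ 2 ^ p * (5 / 2 ^ r + (n : ℝ) / 2 ^ (p + 2 ^ q + r)) := by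
        have hN1 : (1:ℝ) ≤ (n:ℝ) := by exact_mod_cast hn1
        have hM1 : (1:ℝ) ≤ (m:ℝ) := by exact_mod_cast hm
        have hMN : (m:ℝ) ≤ (n:ℝ) := by exact_mod_cast hmn
        have hQpos : (0:ℝ) < 2^(2^q) := by positivity
        have hRpos : (0:ℝ) < 2^r := by positivity
        have hNpos : (0:ℝ) < n := by linarith
        have e1 : (2^p : ℝ) * n * m * bR
            = (m * 2^p)/(((n:ℝ)+1)*2^r) + m/(2^(2^q) * 2^r) := by
          rw [hbRdef]
          field_simp
        have e2 : (2:ℝ) ^ p * (5 / 2 ^ r + (n : ℝ) / 2 ^ (p + 2 ^ q + r))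
            = 5*2^p/2^r + n/(2^(2^q)*2^r) := by
          rw [pow_add, pow_add]
          field_simp
        rw [e1, e2]
        have i1 : (m * 2^p)/(((n:ℝ)+1)*2^r) ≤ 5*2^p/2^r := by
          rw [div_le_div_iff₀ (by positivity) (by positivity)]
          have h5 : (m:ℝ) * (2^p * 2^r) ≤ ((n:ℝ)+1) * (2^p * 2^r) :=
            mul_le_mul_of_nonneg_right (by linarith) (by positivity)
          nlinarith [h5, mul_pos (mul_pos (show (0:ℝ) < (n:ℝ)+1 by linarith) hPpos) hRpos]
        have i2 : (m:ℝ)/(2^(2^q)*2^r) ≤ (n:ℝ)/(2^(2^q)*2^r) := by gcongr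
        linarith
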